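/- arXiv:2111.02593 — 3 statements merged into one kernel-verified Lean document; each statement's English description precedes it below -/
import Mathlib

section
/- Let V ≥ 0 and rmax ≥ 0 be real numbers, and let Q, D, r : ℕ → ℝ satisfy for every t: Q(t+1) = Q(t) - D(t) + r(t), 0 ≤ D(t) ≤ Q(t), r(t) ∈ {0, rmax}, and r(t) = rmax implies Q(t) ≤ V. If 0 ≤ Q(0) ≤ V + rmax, then 0 ≤ Q(t) ≤ V + rmax for all t ∈ ℕ. -/
/-- Bounded data queue under the threshold-based sensing policy.
If `Q(t+1) = Q(t) - D(t) + r(t)`, `0 ≤ D(t) ≤ Q(t)`, `r(t) ∈ {0, rmax}`, and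
`r(t) = rmax` only when `Q(t) ≤ V`, then `0 ≤ Q(0) ≤ V + rmax` implies
`0 ≤ Q(t) ≤ V + rmax` for all `t`. -/
theorem stmt_5 (V rmax : ℝ) (hV : 0 ≤ V) (hrmax : 0 ≤ rmax)
    (Q D r : ℕ → ℝ)
    (hupd : ∀ t : ℕ, Q (t + 1) = Q t - D t + r t)
    (hD : ∀ t : ℕ, 0 ≤ D t ∧ D t ≤ Q t)
    (hr : ∀ t : ℕ, r t = 0 ∨ r t = rmax)
    (hpol : ∀ t : ℕ, r t = rmax → Q t ≤ V)
    (h0 : 0 ≤ Q 0 ∧ Q 0 ≤ V + rmax) :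
    ∀ t : ℕ, 0 ≤ Q t ∧ Q t ≤ V + rmax := by
  intro t
  induction t with
  | zero => exact h0
  | succ n ih =>
    obtain ⟨hD0, hDQ⟩ := hD n
    have hrn : 0 ≤ r n := by rcases hr n with h | h <;> simp [h, hrmax]
    constructor
    · rw [hupd n]; linarith
    · rcases hr n with h | h
      · rw [hupd n, h]; linarith [ih.2]
      · have := hpol n h
        rw [hupd n, h]; linarith
end

section
/- Let λ, κ, T, W, φ, γ, τ be positive reals, Q ≥ 0, Q0 ≥ 0, and B̃ < 0. Define U'(f) = 3*λ*κ*T*B̃*f^2 - λ*B̃*T*(ln 2/(W*φ*γ))*2^{Q/(W*τ) - f*T/(W*τ*φ)} + (T/φ)*Q0 for f ≥ 0. Then U' is strictly decreasing on [0, ∞), U'(0) > 0, U'(f) → -∞ as f → ∞, and U' has a unique zero in (0, ∞). -/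
open Filter

/-- The derivative
`U'(f) = 3*λ*κ*T*B̃*f² - λ*B̃*T*(ln 2/(W*φ*γ))*2^{Q/(W*τ) - f*T/(W*τ*φ)} + (T/φ)*Q0`
(with `B̃ < 0`) is strictly decreasing on `[0, ∞)`, positive at `0`, tends to `-∞`
as `f → ∞`, and has a unique zero in `(0, ∞)`. -/
theorem stmt_13 (lam κ T W φ γ τ : ℝ) (Q Q0 Btil : ℝ)
    (hlam : 0 < lam) (hκ : 0 < κ) (hT : 0 < T) (hW : 0 < W) (hφ : 0 < φ)
    (hγ : 0 < γ) (hτ : 0 < τ) (hQ : 0 ≤ Q) (hQ0 : 0 ≤ Q0) (hB : Btil < 0) :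
    StrictAntiOn
      (fun f : ℝ => 3 * lam * κ * T * Btil * f ^ 2 -
        lam * Btil * T * (Real.log 2 / (W * φ * γ)) *
          (2 : ℝ) ^ (Q / (W * τ) - f * T / (W * τ * φ)) + (T / φ) * Q0)
      (Set.Ici (0 : ℝ)) ∧
    (0 < 3 * lam * κ * T * Btil * (0 : ℝ) ^ 2 -
        lam * Btil * T * (Real.log 2 / (W * φ * γ)) *
          (2 : ℝ) ^ (Q / (W * τ) - (0 : ℝ) * T / (W * τ * φ)) + (T / φ) * Q0) ∧
    Filter.Tendsto
      (fun f : ℝ => 3 * lam * κ * T * Btil * f ^ 2 -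
        lam * Btil * T * (Real.log 2 / (W * φ * γ)) *
          (2 : ℝ) ^ (Q / (W * τ) - f * T / (W * τ * φ)) + (T / φ) * Q0)
      Filter.atTop Filter.atBot ∧
    (∃! f : ℝ, 0 < f ∧
      3 * lam * κ * T * Btil * f ^ 2 -
        lam * Btil * T * (Real.log 2 / (W * φ * γ)) *
          (2 : ℝ) ^ (Q / (W * τ) - f * T / (W * τ * φ)) + (T / φ) * Q0 = 0) := by
  have hlog : 0 < Real.log 2 := Real.log_pos one_lt_two
  have hA : 3 * lam * κ * T * Btil < 0 := by nlinarith [mul_pos (mul_pos hlam hκ) hT]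
  have hk : lam * Btil * T * (Real.log 2 / (W * φ * γ)) < 0 := by
    have h1 : 0 < Real.log 2 / (W * φ * γ) := by positivity
    nlinarith [mul_pos hlam hT]
  set U := fun f : ℝ => 3 * lam * κ * T * Btil * f ^ 2 -
        lam * Btil * T * (Real.log 2 / (W * φ * γ)) *
          (2 : ℝ) ^ (Q / (W * τ) - f * T / (W * τ * φ)) + (T / φ) * Q0 with hU
  have hanti : StrictAntiOn U (Set.Ici (0 : ℝ)) := by
    intro x hx y hy hxy
    simp only [hU]
    have hx0 : (0:ℝ) ≤ x := hx
    have hexp : Q / (W * τ) - y * T / (W * τ * φ) < Q / (W * τ) - x * T / (W * τ * φ) := by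
      have : x * T / (W * τ * φ) < y * T / (W * τ * φ) := by gcongr
      linarith
    have hE : (2:ℝ) ^ (Q / (W * τ) - y * T / (W * τ * φ)) <
        (2:ℝ) ^ (Q / (W * τ) - x * T / (W * τ * φ)) :=
      (Real.rpow_lt_rpow_left_iff one_lt_two).mpr hexp
    have h1 : 3 * lam * κ * T * Btil * y ^ 2 < 3 * lam * κ * T * Btil * x ^ 2 := by
      have : x ^ 2 < y ^ 2 := by nlinarith
      nlinarith
    have h2 : lam * Btil * T * (Real.log 2 / (W * φ * γ)) *
          (2 : ℝ) ^ (Q / (W * τ) - x * T / (W * τ * φ)) <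
        lam * Btil * T * (Real.log 2 / (W * φ * γ)) *
          (2 : ℝ) ^ (Q / (W * τ) - y * T / (W * τ * φ)) :=
      mul_lt_mul_of_neg_left hE hk
    linarith
  have hpos0 : 0 < U 0 := by
    have hE : (0:ℝ) < (2:ℝ) ^ (Q / (W * τ) - (0:ℝ) * T / (W * τ * φ)) :=
      Real.rpow_pos_of_pos (by norm_num) _
    have hD : 0 ≤ T / φ * Q0 := by positivity
    simp only [hU]
    nlinarith [mul_neg_of_neg_of_pos hk hE]
  have htend : Tendsto U atTop atBot := by
    have h1 : Tendsto (fun f : ℝ => 3 * lam * κ * T * Btil * f ^ 2) atTop atBot := by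
      rw [tendsto_const_mul_atBot_of_neg hA]
      exact tendsto_pow_atTop (by norm_num)
    have h2 : Tendsto (fun f : ℝ => Q / (W * τ) - f * T / (W * τ * φ)) atTop atBot := by
      apply tendsto_atBot_add_const_left
      rw [tendsto_neg_atBot_iff]
      simp only [mul_div_assoc]
      exact tendsto_id.atTop_mul_const (by positivity)
    have h3 : Tendsto (fun f : ℝ => (2:ℝ) ^ (Q / (W * τ) - f * T / (W * τ * φ))) atTop (nhds 0) := by
      have : ∀ f : ℝ, (2:ℝ) ^ (Q / (W * τ) - f * T / (W * τ * φ)) =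
          Real.exp (Real.log 2 * (Q / (W * τ) - f * T / (W * τ * φ))) := fun f =>
        Real.rpow_def_of_pos (by norm_num) _
      simp only [this]
      exact Real.tendsto_exp_atBot.comp ((tendsto_const_mul_atBot_of_pos hlog).mpr h2)
    have h4 : Tendsto (fun f : ℝ =>
        -(lam * Btil * T * (Real.log 2 / (W * φ * γ)) *
          (2:ℝ) ^ (Q / (W * τ) - f * T / (W * τ * φ))) + T / φ * Q0) atTop
        (nhds (-(lam * Btil * T * (Real.log 2 / (W * φ * γ)) * 0) + T / φ * Q0)) :=
      ((h3.const_mul _).neg).add tendsto_const_nhds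
    have := h1.atBot_add h4
    simp only [hU]
    convert this using 2 with f
    ring
  refine ⟨hanti, hpos0, htend, ?_⟩
  have hcont : Continuous U := by
    simp only [hU]
    have : Continuous (fun f : ℝ => (2:ℝ) ^ (Q / (W * τ) - f * T / (W * τ * φ))) := by
      have h : ∀ f : ℝ, (2:ℝ) ^ (Q / (W * τ) - f * T / (W * τ * φ)) =
          Real.exp (Real.log 2 * (Q / (W * τ) - f * T / (W * τ * φ))) := fun f =>
        Real.rpow_def_of_pos (by norm_num) _
      simp only [h]
      fun_prop
    fun_prop
  obtain ⟨M, hM1, hM0⟩ :=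
    ((htend.eventually (eventually_le_atBot (-1 : ℝ))).and (eventually_ge_atTop (0:ℝ))).exists
  have hUM : U M ≤ 0 := by linarith
  have h0 : (0:ℝ) ∈ Set.Icc (U M) (U 0) := ⟨hUM, hpos0.le⟩
  obtain ⟨c, hc, hUc⟩ := intermediate_value_Icc' hM0 hcont.continuousOn h0
  have hc0 : 0 < c := by
    rcases lt_or_eq_of_le hc.1 with h | h
    · exact h
    · exfalso; rw [← h] at hUc; linarith
  refine ⟨c, ⟨hc0, hUc⟩, ?_⟩
  rintro d ⟨hd0, hUd⟩
  exact hanti.injOn (Set.mem_Ici.mpr hd0.le) (Set.mem_Ici.mpr hc0.le) (by rw [hUc]; exact hUd)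
end

section
/- Let G1 : [0, ∞) → ℝ be given by G1(p) = Σ_{i=1}^K w_i*e_i(p) - m*p, where each e_i(p) = (a1_i*p*h_i + a2_i)/(p*h_i + a3_i) - a2_i/a3_i with a3_i > 0, a1_i*a3_i - a2_i ≥ 0, h_i > 0, w_i ≥ 0, m ≥ 0, and let pmax > 0. Then: (a) if m = 0, G1 is nondecreasing on [0, pmax] and p = pmax is a maximizer of G1 over [0, pmax]; (b) if m > 0 and G1'(0) ≤ 0, then p = 0 is a maximizer of G1 over [0, pmax]; (c) if m > 0 and G1'(0) > 0, then G1' has a unique zero p̂ ∈ (0, ∞), and p = min(p̂, pmax) is a maximizer of G1 over [0, pmax]. -/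
/-- The wireless charging objective
`G1(p) = Σ_i w_i*e_i(p) - m*p` with
`e_i(p) = (a1_i*p*h_i + a2_i)/(p*h_i + a3_i) - a2_i/a3_i`. -/
noncomputable def G1 {K : ℕ} (a1 a2 a3 h w : Fin K → ℝ) (m : ℝ) (p : ℝ) : ℝ :=
  (∑ i : Fin K,
    w i * ((a1 i * p * h i + a2 i) / (p * h i + a3 i) - a2 i / a3 i)) - m * p

noncomputable def Fder {K : ℕ} (a1 a2 a3 h w : Fin K → ℝ) (p : ℝ) : ℝ :=
  ∑ i : Fin K, w i * (h i * (a1 i * a3 i - a2 i)) / (p * h i + a3 i)^2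

variable {K : ℕ} {a1 a2 a3 h w : Fin K → ℝ} {m : ℝ}

lemma den_pos (ha3 : ∀ i, 0 < a3 i) (hh : ∀ i, 0 < h i) {p : ℝ} (hp : 0 ≤ p) (i : Fin K) :
    0 < p * h i + a3 i :=
  add_pos_of_nonneg_of_pos (mul_nonneg hp (hh i).le) (ha3 i)

lemma hasDerivAt_G1 (ha3 : ∀ i, 0 < a3 i) (hh : ∀ i, 0 < h i) {p : ℝ} (hp : 0 ≤ p) :
    HasDerivAt (G1 a1 a2 a3 h w m) (Fder a1 a2 a3 h w p - m) p := by
  have hsum : HasDerivAt (fun q => ∑ i : Fin K,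
      w i * ((a1 i * q * h i + a2 i) / (q * h i + a3 i) - a2 i / a3 i))
      (Fder a1 a2 a3 h w p) p := by
    unfold Fder
    apply HasDerivAt.fun_sum
    intro i _
    have hden : p * h i + a3 i ≠ 0 := (den_pos ha3 hh hp i).ne'
    have hnum : HasDerivAt (fun q => a1 i * q * h i + a2 i) (a1 i * h i) p := by
      simpa using (((hasDerivAt_id p).const_mul (a1 i)).mul_const (h i)).add_const (a2 i)
    have hde : HasDerivAt (fun q => q * h i + a3 i) (h i) p := by
      simpa using ((hasDerivAt_id p).mul_const (h i)).add_const (a3 i)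
    have hdiv := hnum.fun_div hde hden
    have hfin := (hdiv.sub_const (a2 i / a3 i)).const_mul (w i)
    convert hfin using 1
    · rfl
    rw [mul_div_assoc]
    congr 1
    congr 1
    ring
  have hlin : HasDerivAt (fun q : ℝ => m * q) m p := by
    simpa using (hasDerivAt_id p).const_mul m
  exact hsum.sub hlin

lemma deriv_G1 (ha3 : ∀ i, 0 < a3 i) (hh : ∀ i, 0 < h i) {p : ℝ} (hp : 0 ≤ p) :
    deriv (G1 a1 a2 a3 h w m) p = Fder a1 a2 a3 h w p - m :=
  (hasDerivAt_G1 ha3 hh hp).deriv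

lemma Fder_anti (ha3 : ∀ i, 0 < a3 i) (ha : ∀ i, 0 ≤ a1 i * a3 i - a2 i)
    (hh : ∀ i, 0 < h i) (hw : ∀ i, 0 ≤ w i) {p q : ℝ} (hp : 0 ≤ p) (hpq : p ≤ q) :
    Fder a1 a2 a3 h w q ≤ Fder a1 a2 a3 h w p := by
  apply Finset.sum_le_sum
  intro i _
  have h1 := den_pos ha3 hh hp i
  have h2 : p * h i + a3 i ≤ q * h i + a3 i := by nlinarith [hh i, ha3 i]
  have hc : 0 ≤ w i * (h i * (a1 i * a3 i - a2 i)) :=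
    mul_nonneg (hw i) (mul_nonneg (hh i).le (ha i))
  gcongr

lemma Fder_strict_anti (ha3 : ∀ i, 0 < a3 i) (ha : ∀ i, 0 ≤ a1 i * a3 i - a2 i)
    (hh : ∀ i, 0 < h i) (hw : ∀ i, 0 ≤ w i)
    (hpos : 0 < Fder a1 a2 a3 h w 0) {p q : ℝ} (hp : 0 ≤ p) (hpq : p < q) :
    Fder a1 a2 a3 h w q < Fder a1 a2 a3 h w p := by
  obtain ⟨i0, -, hi0⟩ : ∃ i ∈ Finset.univ,
      0 < w i * (h i * (a1 i * a3 i - a2 i)) / (0 * h i + a3 i)^2 := by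
    by_contra hcon
    push_neg at hcon
    have : Fder a1 a2 a3 h w 0 ≤ 0 := Finset.sum_nonpos fun i hi => hcon i hi
    linarith
  have hc0 : 0 < w i0 * (h i0 * (a1 i0 * a3 i0 - a2 i0)) := by
    rcases div_pos_iff.mp hi0 with ⟨h1, -⟩ | ⟨-, h2⟩
    · exact h1
    · exact absurd h2 (not_lt.mpr (sq_nonneg _))
  apply Finset.sum_lt_sum
  · intro i _
    have h1 := den_pos ha3 hh hp i
    have h2 : p * h i + a3 i ≤ q * h i + a3 i := by nlinarith [hh i, ha3 i]
    have hc : 0 ≤ w i * (h i * (a1 i * a3 i - a2 i)) :=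
      mul_nonneg (hw i) (mul_nonneg (hh i).le (ha i))
    gcongr
  · refine ⟨i0, Finset.mem_univ i0, ?_⟩
    have h1 := den_pos ha3 hh hp i0
    have h2 : p * h i0 + a3 i0 < q * h i0 + a3 i0 := by nlinarith [hh i0, ha3 i0]
    have hq := den_pos ha3 hh (hp.trans hpq.le) i0
    apply div_lt_div_of_pos_left hc0 ?_ ?_
    · positivity
    · nlinarith

lemma Fder_small (ha3 : ∀ i, 0 < a3 i) (ha : ∀ i, 0 ≤ a1 i * a3 i - a2 i)
    (hh : ∀ i, 0 < h i) (hw : ∀ i, 0 ≤ w i) {ε : ℝ} (hε : 0 < ε) :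
    ∃ P : ℝ, 0 < P ∧ Fder a1 a2 a3 h w P < ε := by
  obtain ⟨C, hC⟩ : ∃ C : ℝ, C = ∑ i : Fin K, w i * (h i * (a1 i * a3 i - a2 i)) / (h i)^2 :=
    ⟨_, rfl⟩
  have hC0 : 0 ≤ C := hC ▸ Finset.sum_nonneg fun i _ =>
    div_nonneg (mul_nonneg (hw i) (mul_nonneg (hh i).le (ha i))) (sq_nonneg _)
  obtain ⟨P, hPdef⟩ : ∃ P : ℝ, P = C / ε + 1 := ⟨_, rfl⟩
  have hP : 0 < P := by
    have := div_nonneg hC0 hε.le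
    linarith
  refine ⟨P, hP, ?_⟩
  have hle : Fder a1 a2 a3 h w P ≤ C / P^2 := by
    rw [hC, Finset.sum_div]
    apply Finset.sum_le_sum
    intro i _
    have hc : 0 ≤ w i * (h i * (a1 i * a3 i - a2 i)) :=
      mul_nonneg (hw i) (mul_nonneg (hh i).le (ha i))
    rw [div_div]
    have hhi := hh i
    have h1 : 0 < (h i)^2 * P^2 := by positivity
    have h2 : (h i)^2 * P^2 ≤ (P * h i + a3 i)^2 := by
      nlinarith [mul_pos hP (hh i), ha3 i, sq_nonneg (a3 i)]
    gcongr
  have hlt : C / P^2 < ε := by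
    rw [div_lt_iff₀ (by positivity)]
    have heq : ε * (C / ε) = C := by field_simp
    have hP2 : ε * P^2 = ε * (C/ε)^2 + 2 * (ε * (C/ε)) + ε := by rw [hPdef]; ring
    have hnn : 0 ≤ ε * (C/ε)^2 := mul_nonneg hε.le (sq_nonneg _)
    linarith
  linarith

lemma continuousOn_G1 (ha3 : ∀ i, 0 < a3 i) (hh : ∀ i, 0 < h i) {s : Set ℝ}
    (hs : s ⊆ Set.Ici 0) : ContinuousOn (G1 a1 a2 a3 h w m) s := fun p hp =>
  (hasDerivAt_G1 ha3 hh (hs hp)).continuousAt.continuousWithinAt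

lemma mono_G1 (ha3 : ∀ i, 0 < a3 i) (hh : ∀ i, 0 < h i) {b : ℝ}
    (hd : ∀ p ∈ Set.Ioo (0:ℝ) b, m ≤ Fder a1 a2 a3 h w p) :
    MonotoneOn (G1 a1 a2 a3 h w m) (Set.Icc 0 b) := by
  apply monotoneOn_of_deriv_nonneg (convex_Icc 0 b)
    (continuousOn_G1 ha3 hh (fun x hx => hx.1))
  · intro p hp
    rw [interior_Icc] at hp
    exact (hasDerivAt_G1 (m := m) ha3 hh hp.1.le).differentiableAt.differentiableWithinAt
  · intro p hp
    rw [interior_Icc] at hp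
    rw [deriv_G1 ha3 hh hp.1.le]
    linarith [hd p hp]

lemma anti_G1 (ha3 : ∀ i, 0 < a3 i) (hh : ∀ i, 0 < h i) {b c : ℝ} (hb : 0 ≤ b)
    (hd : ∀ p ∈ Set.Ioo b c, Fder a1 a2 a3 h w p ≤ m) :
    AntitoneOn (G1 a1 a2 a3 h w m) (Set.Icc b c) := by
  apply antitoneOn_of_deriv_nonpos (convex_Icc b c)
    (continuousOn_G1 ha3 hh (fun x hx => le_trans hb hx.1))
  · intro p hp
    rw [interior_Icc] at hp
    exact (hasDerivAt_G1 (m := m) ha3 hh (le_trans hb hp.1.le)).differentiableAt.differentiableWithinAt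
  · intro p hp
    rw [interior_Icc] at hp
    rw [deriv_G1 ha3 hh (le_trans hb hp.1.le)]
    linarith [hd p hp]

lemma isMaxOn_of_mono_anti {f : ℝ → ℝ} {a b c : ℝ} (hab : a ≤ b) (hbc : b ≤ c)
    (hmono : MonotoneOn f (Set.Icc a b)) (hanti : AntitoneOn f (Set.Icc b c)) :
    IsMaxOn f (Set.Icc a c) b := by
  rw [isMaxOn_iff]
  intro x hx
  rcases le_total x b with hxb | hbx
  · exact hmono ⟨hx.1, hxb⟩ ⟨hab, le_refl b⟩ hxb
  · exact hanti ⟨le_refl b, hbc⟩ ⟨hbx, hx.2⟩ hbx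

/-- Threshold structure of the optimal wireless charging power.
(a) if `m = 0`, `G1` is nondecreasing on `[0, pmax]` and `pmax` is a maximizer;
(b) if `m > 0` and `G1'(0) ≤ 0`, then `0` is a maximizer over `[0, pmax]`;
(c) if `m > 0` and `G1'(0) > 0`, then `G1'` has a unique zero `p̂ ∈ (0, ∞)` and
`min(p̂, pmax)` is a maximizer over `[0, pmax]`. -/
theorem stmt_17 (K : ℕ) (hK : 1 ≤ K)
    (a1 a2 a3 h w : Fin K → ℝ) (m pmax : ℝ)
    (ha3 : ∀ i, 0 < a3 i) (ha : ∀ i, 0 ≤ a1 i * a3 i - a2 i) (hh : ∀ i, 0 < h i)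
    (hw : ∀ i, 0 ≤ w i) (hm : 0 ≤ m) (hpmax : 0 < pmax) :
    (m = 0 →
      MonotoneOn (G1 a1 a2 a3 h w m) (Set.Icc (0 : ℝ) pmax) ∧
      IsMaxOn (G1 a1 a2 a3 h w m) (Set.Icc (0 : ℝ) pmax) pmax) ∧
    (0 < m → deriv (G1 a1 a2 a3 h w m) 0 ≤ 0 →
      IsMaxOn (G1 a1 a2 a3 h w m) (Set.Icc (0 : ℝ) pmax) 0) ∧
    (0 < m → 0 < deriv (G1 a1 a2 a3 h w m) 0 →
      ∃ phat : ℝ, 0 < phat ∧ deriv (G1 a1 a2 a3 h w m) phat = 0 ∧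
        (∀ q : ℝ, 0 < q → deriv (G1 a1 a2 a3 h w m) q = 0 → q = phat) ∧
        IsMaxOn (G1 a1 a2 a3 h w m) (Set.Icc (0 : ℝ) pmax) (min phat pmax)) := by
  have Fnn : ∀ {p : ℝ}, 0 ≤ p → 0 ≤ Fder a1 a2 a3 h w p := fun {p} hp =>
    Finset.sum_nonneg fun i _ =>
      div_nonneg (mul_nonneg (hw i) (mul_nonneg (hh i).le (ha i))) (sq_nonneg _)
  refine ⟨?_, ?_, ?_⟩
  · -- (a) m = 0
    intro hm0
    subst hm0
    have hmono : MonotoneOn (G1 a1 a2 a3 h w 0) (Set.Icc 0 pmax) :=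
      mono_G1 ha3 hh fun p hp => Fnn hp.1.le
    refine ⟨hmono, ?_⟩
    rw [isMaxOn_iff]
    intro x hx
    exact hmono hx ⟨hpmax.le, le_refl _⟩ hx.2
  · -- (b)
    intro hm0 hd0
    rw [deriv_G1 ha3 hh (le_refl (0:ℝ))] at hd0
    have hanti : AntitoneOn (G1 a1 a2 a3 h w m) (Set.Icc 0 pmax) :=
      anti_G1 ha3 hh (le_refl (0:ℝ)) fun p hp =>
        le_trans (Fder_anti ha3 ha hh hw (le_refl (0:ℝ)) hp.1.le) (by linarith)
    rw [isMaxOn_iff]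
    intro x hx
    exact hanti ⟨le_refl _, hpmax.le⟩ hx hx.1
  · -- (c)
    intro hm0 hd0
    rw [deriv_G1 ha3 hh (le_refl (0:ℝ))] at hd0
    have hF0 : m < Fder a1 a2 a3 h w 0 := by linarith
    have hF0pos : 0 < Fder a1 a2 a3 h w 0 := lt_of_le_of_lt hm hF0
    obtain ⟨P, hPpos, hPsmall⟩ := Fder_small (ε := m) ha3 ha hh hw hm0
    -- continuity of Fder on [0, P]
    have hFcont : ContinuousOn (Fder a1 a2 a3 h w) (Set.Icc 0 P) := by
      apply continuousOn_finset_sum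
      intro i _
      apply ContinuousOn.div continuousOn_const
      · exact (((continuous_id.mul continuous_const).add continuous_const).pow 2).continuousOn
      · intro p hp
        exact pow_ne_zero 2 (den_pos ha3 hh hp.1 i).ne'
    have hmem : m ∈ Set.Icc (Fder a1 a2 a3 h w P) (Fder a1 a2 a3 h w 0) :=
      ⟨hPsmall.le, hF0.le⟩
    obtain ⟨phat, hphatmem, hphat⟩ := intermediate_value_Icc' hPpos.le hFcont hmem
    have hphatpos : 0 < phat := by
      rcases lt_or_eq_of_le hphatmem.1 with h' | h'
      · exact h'
      · exfalso; rw [← h'] at hphat; linarith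
    have hderiv0 : deriv (G1 a1 a2 a3 h w m) phat = 0 := by
      rw [deriv_G1 ha3 hh hphatpos.le, hphat]; ring
    have huniq : ∀ q : ℝ, 0 < q → deriv (G1 a1 a2 a3 h w m) q = 0 → q = phat := by
      intro q hq hdq
      rw [deriv_G1 ha3 hh hq.le] at hdq
      have hFq : Fder a1 a2 a3 h w q = m := by linarith
      by_contra hne
      rcases lt_or_gt_of_ne hne with hlt | hgt
      · have := Fder_strict_anti ha3 ha hh hw hF0pos hq.le hlt
        rw [hFq, hphat] at this; exact lt_irrefl m this
      · have := Fder_strict_anti ha3 ha hh hw hF0pos hphatpos.le hgt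
        rw [hFq, hphat] at this; exact lt_irrefl m this
    refine ⟨phat, hphatpos, hderiv0, huniq, ?_⟩
    set ps := min phat pmax with hps
    have hps0 : 0 ≤ ps := le_min hphatpos.le hpmax.le
    have hpspmax : ps ≤ pmax := min_le_right _ _
    have hmono : MonotoneOn (G1 a1 a2 a3 h w m) (Set.Icc 0 ps) := by
      apply mono_G1 ha3 hh
      intro p hp
      have hple : p ≤ phat := le_trans hp.2.le (min_le_left _ _)
      calc m = Fder a1 a2 a3 h w phat := hphat.symm
        _ ≤ Fder a1 a2 a3 h w p := Fder_anti ha3 ha hh hw hp.1.le hple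
    have hanti : AntitoneOn (G1 a1 a2 a3 h w m) (Set.Icc ps pmax) := by
      apply anti_G1 ha3 hh hps0
      intro p hp
      have hpsne : ps < pmax := lt_of_lt_of_le hp.1 hp.2.le
      have hpseq : ps = phat := by
        rcases min_cases phat pmax with ⟨heq, -⟩ | ⟨heq, -⟩
        · exact heq
        · exfalso; rw [hps, heq] at hpsne; exact lt_irrefl _ hpsne
      have hplt : phat < p := by rw [← hpseq]; exact hp.1
      calc Fder a1 a2 a3 h w p ≤ Fder a1 a2 a3 h w phat :=
            Fder_anti ha3 ha hh hw hphatpos.le hplt.le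
        _ = m := hphat
    exact isMaxOn_of_mono_anti hps0 hpspmax hmono hanti
end
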